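/- arXiv:1906.06511 — 3 statements merged into one kernel-verified Lean document; each statement's English description precedes it below -/
import Mathlib

section
/- Let a : [0,∞) → [0,∞) be a C¹ function with a(0)=0 satisfying a₀ ≤ t a'(t)/a(t) ≤ a₁ for all t > 0, where a₀, a₁ > 0. Then the map ξ ↦ (a(|ξ|)/|ξ|) ξ on ℝⁿ \ {0} is strictly monotone: for all ξ, ζ ∈ ℝⁿ \ {0} with ξ ≠ ζ, one has ((a(|ξ|)/|ξ|) ξ − (a(|ζ|)/|ζ|) ζ) · (ξ − ζ) > 0. -/
open Real

private lemma inner_expand_aux {E : Type*} [NormedAddCommGroup E] [InnerProductSpace ℝ E]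
    (c d : ℝ) (x y : E) :
    (inner ℝ (c • x - d • y) (x - y) : ℝ)
      = c * ‖x‖ ^ 2 + d * ‖y‖ ^ 2 - (c + d) * inner ℝ x y := by
  rw [inner_sub_left, inner_sub_right, inner_sub_right, real_inner_smul_left,
    real_inner_smul_left, real_inner_smul_left, real_inner_smul_left,
    real_inner_self_eq_norm_sq, real_inner_self_eq_norm_sq, real_inner_comm y x]
  ring

/-- Strict monotonicity of the A-Laplacian's vector field
`ξ ↦ (a(‖ξ‖)/‖ξ‖) ξ` on `ℝⁿ \ {0}`. -/
theorem a_laplacian_strict_monotone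
    (n : ℕ) (hn : 2 ≤ n)
    (a : ℝ → ℝ) (a₀ a₁ : ℝ)
    (ha₀ : 0 < a₀) (ha₁ : a₀ ≤ a₁)
    (haC1 : ContDiff ℝ 1 a)
    (ha_nonneg : ∀ t, 0 ≤ t → 0 ≤ a t)
    (ha0 : a 0 = 0)
    (hcond : ∀ t > (0:ℝ), a₀ ≤ t * deriv a t / a t ∧ t * deriv a t / a t ≤ a₁) :
    ∀ ξ ζ : EuclideanSpace ℝ (Fin n), ξ ≠ 0 → ζ ≠ 0 → ξ ≠ ζ →
      (0:ℝ) < inner ℝ ((a ‖ξ‖ / ‖ξ‖) • ξ - (a ‖ζ‖ / ‖ζ‖) • ζ) (ξ - ζ) := by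
  -- a is positive on (0,∞)
  have ha_pos : ∀ t : ℝ, 0 < t → 0 < a t := by
    intro t ht
    rcases lt_or_eq_of_le (ha_nonneg t ht.le) with h | h
    · exact h
    · exfalso
      have := (hcond t ht).1
      rw [← h, div_zero] at this
      linarith
  -- deriv a is positive on (0,∞)
  have hd_pos : ∀ t : ℝ, 0 < t → 0 < deriv a t := by
    intro t ht
    have h1 := (hcond t ht).1
    have h2 := ha_pos t ht
    have : 0 < t * deriv a t / a t := lt_of_lt_of_le ha₀ h1
    have htd : 0 < t * deriv a t := by
      have h3 := mul_pos this h2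
      rwa [div_mul_cancel₀ _ h2.ne'] at h3
    by_contra hcon
    push_neg at hcon
    nlinarith [mul_nonneg ht.le (neg_nonneg.mpr hcon)]
  -- a strictly monotone on [0,∞)
  have hmono : StrictMonoOn a (Set.Ici (0:ℝ)) := by
    apply strictMonoOn_of_deriv_pos (convex_Ici 0) (haC1.continuous.continuousOn)
    intro x hx
    rw [interior_Ici] at hx
    exact hd_pos x hx
  intro ξ ζ hξ hζ hne
  set s := ‖ξ‖ with hs
  set t := ‖ζ‖ with ht
  have hs0 : 0 < s := norm_pos_iff.mpr hξ
  have ht0 : 0 < t := norm_pos_iff.mpr hζ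
  have has : 0 < a s := ha_pos s hs0
  have hat : 0 < a t := ha_pos t ht0
  set p : ℝ := inner ℝ ξ ζ with hp
  have hcs : p ≤ s * t := real_inner_le_norm ξ ζ
  have hip : (inner ℝ ξ ζ : ℝ) = p := hp.symm
  have hic : (inner ℝ ζ ξ : ℝ) = p := by rw [real_inner_comm]
  have key : (inner ℝ ((a s / s) • ξ - (a t / t) • ζ) (ξ - ζ) : ℝ)
      = a s * s + a t * t - (a s / s + a t / t) * p := by
    rw [inner_expand_aux, hip, ← hs, ← ht]
    field_simp
  rw [key]
  rcases eq_or_ne s t with hst | hst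
  · -- s = t : then p < s*t strictly since ξ ≠ ζ
    have hplt : p < s * t := by
      rcases lt_or_eq_of_le hcs with h | h
      · exact h
      · exfalso
        have := (inner_eq_norm_mul_iff_real (x := ξ) (y := ζ)).mp h
        rw [← hs, ← ht, ← hst] at this
        exact hne (smul_right_injective _ hs0.ne' this)
    have hc : 0 < a s / s + a t / t := by positivity
    have : a s * s + a t * t = (a s / s + a t / t) * (s * t) := by
      rw [← hst]; field_simp
    nlinarith
  · -- s ≠ t : (a s - a t)(s - t) > 0
    have hprod : 0 < (a s - a t) * (s - t) := by
      rcases hst.lt_or_gt with h | h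
      · have := hmono (Set.mem_Ici.mpr hs0.le) (Set.mem_Ici.mpr ht0.le) h
        nlinarith
      · have := hmono (Set.mem_Ici.mpr ht0.le) (Set.mem_Ici.mpr hs0.le) h
        nlinarith
    have hc : 0 < a s / s + a t / t := by positivity
    have heq : a s * s + a t * t - (a s / s + a t / t) * (s * t)
        = (a s - a t) * (s - t) * 1 - (a s / t) * 0 := by
      field_simp
      ring
    nlinarith [mul_le_mul_of_nonneg_left hcs hc.le]
end

section
/- Let a be C¹ with a(0)=0 and a₀ ≤ t a'(t)/a(t) ≤ a₁ for t > 0. With the radial barrier v(x) = k(e^{−αρ²} − e^{−α(r+ε)²}) on the annulus D = {r/2 < ρ < r+ε}, where ρ = |x−x₀|, k > 0, α = κ/r², κ = 2(1 + n/a₀), the A-Laplacian Δ_A v = div((a(|∇v|)/|∇v|) ∇v) satisfies Δ_A v(x) ≥ a(|∇v(x)|)/ρ for all x ∈ D. -/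
open Real Set Finset

set_option maxHeartbeats 2000000 in
/-- The radial barrier `v(x) = k(e^{-αρ²} - e^{-α(r+ε)²})` satisfies
`Δ_A v ≥ a(|∇v|)/ρ` on the annulus `D = {r/2 < ρ < r+ε}`, where
`Δ_A v = div((a(|∇v|)/|∇v|) ∇v)`. -/
theorem radial_barrier_A_laplacian_lower_bound
    (n : ℕ) (hn : 2 ≤ n)
    (a : ℝ → ℝ) (a₀ a₁ : ℝ)
    (ha₀ : 0 < a₀) (ha₁ : a₀ ≤ a₁)
    (haC1 : ContDiff ℝ 1 a)
    (ha_nonneg : ∀ t, 0 ≤ t → 0 ≤ a t)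
    (ha0 : a 0 = 0)
    (hcond : ∀ t > (0:ℝ), a₀ ≤ t * deriv a t / a t ∧ t * deriv a t / a t ≤ a₁)
    (κ α r ε k : ℝ)
    (hκ : κ = 2 * (1 + (n : ℝ) / a₀)) (hr : 0 < r) (hα : α = κ / r ^ 2)
    (hε : ε ∈ Ioo 0 r) (hk : 0 < k)
    (x₀ x : EuclideanSpace ℝ (Fin n))
    (hx : ‖x - x₀‖ ∈ Ioo (r / 2) (r + ε)) :
    let v : EuclideanSpace ℝ (Fin n) → ℝ :=
      fun y => k * (exp (-(α * ‖y - x₀‖ ^ 2)) - exp (-(α * (r + ε) ^ 2)))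
    let ρ : ℝ := ‖x - x₀‖
    let E : Fin n → EuclideanSpace ℝ (Fin n) := fun i => EuclideanSpace.single i 1
    a ‖gradient v x‖ / ρ ≤
      ∑ i : Fin n, fderiv ℝ
        (fun y => (a ‖gradient v y‖ / ‖gradient v y‖) * fderiv ℝ v y (E i)) x (E i) := by
  intro v ρ E
  have hκ0 : 0 < κ := by
    rw [hκ]; positivity
  have hα0 : 0 < α := by
    rw [hα]; positivity
  have hρ : 0 < ρ := lt_trans (by positivity) hx.1
  have hρne : ρ ≠ 0 := ne_of_gt hρ
  -- derivative of v
  have hDv : ∀ y : EuclideanSpace ℝ (Fin n), HasFDerivAt v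
      ((-(2*k*α) * exp (-(α * ‖y - x₀‖^2))) • innerSL ℝ (y - x₀)) y := by
    intro y
    have hq : HasFDerivAt (fun y : EuclideanSpace ℝ (Fin n) => ‖y - x₀‖^2)
        (2 • innerSL ℝ (y - x₀)) y := by
      simpa using ((hasFDerivAt_id y).sub_const x₀).norm_sq
    have h1 : HasDerivAt (fun s : ℝ => -(α * s)) (-α) (‖y - x₀‖^2) := by
      simpa [Pi.neg_def] using ((hasDerivAt_id (‖y - x₀‖^2)).const_mul α).neg
    have hh : HasDerivAt (fun s : ℝ => k * (exp (-(α * s)) - exp (-(α * (r + ε) ^ 2))))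
        (k * (exp (-(α * ‖y - x₀‖^2)) * (-α))) (‖y - x₀‖^2) :=
      ((h1.exp).sub_const _).const_mul k
    have := hh.comp_hasFDerivAt y hq
    refine this.congr_fderiv ?_
    ext w
    simp [two_smul]
    ring
  -- gradient of v
  have hgradv : ∀ y : EuclideanSpace ℝ (Fin n),
      gradient v y = (-(2*k*α) * exp (-(α * ‖y - x₀‖^2))) • (y - x₀) := by
    intro y
    have : HasGradientAt v ((-(2*k*α) * exp (-(α * ‖y - x₀‖^2))) • (y - x₀)) y := by
      rw [hasGradientAt_iff_hasFDerivAt]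
      refine (hDv y).congr_fderiv ?_
      ext w
      simp [InnerProductSpace.toDual_apply_apply, real_inner_smul_left]
    exact this.gradient
  set f : ℝ → ℝ := fun t => 2*k*α*t*exp (-(α * t^2)) with hfdef
  have hnormgrad : ∀ y : EuclideanSpace ℝ (Fin n), ‖gradient v y‖ = f ‖y - x₀‖ := by
    intro y
    rw [hgradv y, norm_smul, Real.norm_eq_abs,
      abs_of_nonpos (by
        have h1 : (0:ℝ) < 2*k*α * exp (-(α * ‖y - x₀‖^2)) := by positivity
        linarith : -(2*k*α) * exp (-(α * ‖y - x₀‖^2)) ≤ 0)]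
    simp only [hfdef]
    ring
  -- fderiv of v applied to basis vectors
  have hfd : ∀ (y : EuclideanSpace ℝ (Fin n)) (i : Fin n),
      fderiv ℝ v y (E i) = -(2*k*α) * exp (-(α * ‖y - x₀‖^2)) * ((y - x₀) i) := by
    intro y i
    rw [(hDv y).fderiv]
    simp only [ContinuousLinearMap.coe_smul', Pi.smul_apply, innerSL_apply_apply, smul_eq_mul, E]
    rw [EuclideanSpace.inner_single_right]
    simp [mul_comm]
  -- identify the flux function
  have hfun : ∀ i : Fin n,
      (fun y => (a ‖gradient v y‖ / ‖gradient v y‖) * fderiv ℝ v y (E i))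
        = (fun y => -(a (f ‖y - x₀‖) / ‖y - x₀‖ * ((y - x₀) i))) := by
    intro i
    funext y
    rw [hnormgrad y, hfd y i]
    by_cases hy : y = x₀
    · subst hy
      simp [hfdef, ha0]
    · have hzy : 0 < ‖y - x₀‖ := by
        rw [norm_pos_iff, sub_ne_zero]; exact hy
      have hm : f ‖y - x₀‖ = 2*k*α*‖y - x₀‖*exp (-(α * ‖y - x₀‖^2)) := rfl
      have hmne : f ‖y - x₀‖ ≠ 0 := by rw [hm]; positivity
      rw [hm] at hmne ⊢
      field_simp
  -- derivative of the norm function at x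
  have hρdef : ρ = ‖x - x₀‖ := rfl
  have hN : HasFDerivAt (fun y : EuclideanSpace ℝ (Fin n) => ‖y - x₀‖)
      (ρ⁻¹ • innerSL ℝ (x - x₀)) x := by
    have hq : HasFDerivAt (fun y : EuclideanSpace ℝ (Fin n) => ‖y - x₀‖^2)
        (2 • innerSL ℝ (x - x₀)) x := by
      simpa using ((hasFDerivAt_id x).sub_const x₀).norm_sq
    have hs : HasDerivAt Real.sqrt (1 / (2 * Real.sqrt (‖x - x₀‖^2))) (‖x - x₀‖^2) :=
      Real.hasDerivAt_sqrt (by positivity)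
    have hc := hs.comp_hasFDerivAt x hq
    have heq : (fun y : EuclideanSpace ℝ (Fin n) => Real.sqrt (‖y - x₀‖^2))
        = fun y => ‖y - x₀‖ := by
      funext y; exact Real.sqrt_sq (norm_nonneg _)
    simp only [Function.comp_def] at hc
    rw [heq] at hc
    refine hc.congr_fderiv ?_
    rw [Real.sqrt_sq (norm_nonneg _)]
    ext w
    simp only [ContinuousLinearMap.coe_smul', Pi.smul_apply, innerSL_apply_apply, smul_eq_mul,
      ContinuousLinearMap.smul_apply]
    rw [← hρdef]
    field_simp
    ring
  -- scalar derivative data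
  have hf' : HasDerivAt f (2*k*α*exp (-(α * ρ^2)) * (1 - 2*α*ρ^2)) ρ := by
    have h1 : HasDerivAt (fun t : ℝ => -(α * t^2)) (-(α * (2*ρ))) ρ := by
      have := ((hasDerivAt_pow 2 ρ).const_mul α).neg
      refine this.congr_deriv ?_
      ring
    have h2 := (hasDerivAt_id ρ).mul h1.exp
    have h3 := h2.const_mul (2*k*α)
    have hfeq : f = fun t => (2*k*α) * (id t * exp (-(α*(t:ℝ)^2))) := by
      funext t; simp only [hfdef, id]; ring
    rw [hfeq]
    refine h3.congr_deriv ?_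
    simp only [id]
    ring
  have hAder : HasDerivAt a (deriv a (f ρ)) (f ρ) :=
    ((haC1.differentiable one_ne_zero) (f ρ)).hasDerivAt
  set A' : ℝ := deriv a (f ρ) with hA'def
  set G : ℝ → ℝ := fun t => a (f t) / t with hGdef
  set G' : ℝ := (A' * (2*k*α*exp (-(α * ρ^2)) * (1 - 2*α*ρ^2)) * ρ - a (f ρ) * 1) / ρ^2
    with hG'def
  have hG : HasDerivAt G G' ρ := by
    have := (hAder.comp ρ hf').div (hasDerivAt_id ρ) hρne
    simpa [hGdef, hG'def, Function.comp, Pi.div_def] using this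
  -- component projections
  have hP : ∀ i : Fin n, HasFDerivAt (fun y : EuclideanSpace ℝ (Fin n) => (y - x₀) i)
      (EuclideanSpace.proj i : EuclideanSpace ℝ (Fin n) →L[ℝ] ℝ) x := by
    intro i
    have h := ((EuclideanSpace.proj i : EuclideanSpace ℝ (Fin n) →L[ℝ] ℝ).hasFDerivAt
      (x := x)).sub_const (x₀ i)
    refine h.congr_of_eventuallyEq (Filter.Eventually.of_forall fun y => ?_)
    simp
  -- divergence terms
  have hsum : ∀ i : Fin n, fderiv ℝ (fun y => -(a (f ‖y - x₀‖) / ‖y - x₀‖ * ((y - x₀) i))) x (E i)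
      = -(G ρ + G' / ρ * ((x - x₀) i)^2) := by
    intro i
    have h := ((hG.comp_hasFDerivAt x hN).mul (hP i)).neg
    have hfuneq : (fun y : EuclideanSpace ℝ (Fin n) => -(a (f ‖y - x₀‖) / ‖y - x₀‖ * ((y - x₀) i)))
        = fun y => -((G ∘ fun y : EuclideanSpace ℝ (Fin n) => ‖y - x₀‖) y * ((y - x₀) i)) := by
      funext y; simp [hGdef]
    simp only [Pi.neg_def, Pi.mul_def] at h
    rw [hfuneq, h.fderiv]
    simp only [ContinuousLinearMap.neg_apply, ContinuousLinearMap.add_apply,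
      ContinuousLinearMap.coe_smul', Pi.smul_apply, innerSL_apply_apply, smul_eq_mul,
      Function.comp_apply, E]
    rw [EuclideanSpace.inner_single_right]
    simp [EuclideanSpace.single_apply, ← hρdef]
    ring
  -- sum of squares of components
  have hzsum : ∑ i : Fin n, ((x - x₀) i)^2 = ρ^2 := by
    rw [hρdef, EuclideanSpace.norm_eq, Real.sq_sqrt (by positivity)]
    simp [sq_abs]
  -- total divergence
  have hgoal : ∑ i : Fin n, fderiv ℝ
      (fun y => (a ‖gradient v y‖ / ‖gradient v y‖) * fderiv ℝ v y (E i)) x (E i)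
      = -((n : ℝ) * G ρ + G' * ρ) := by
    have h1 : ∑ i : Fin n, fderiv ℝ
        (fun y => (a ‖gradient v y‖ / ‖gradient v y‖) * fderiv ℝ v y (E i)) x (E i)
        = ∑ i : Fin n, -(G ρ + G' / ρ * ((x - x₀) i)^2) :=
      Finset.sum_congr rfl (fun i _ => by rw [hfun i, hsum i])
    rw [h1, Finset.sum_neg_distrib, Finset.sum_add_distrib, Finset.sum_const,
      ← Finset.mul_sum, hzsum]
    have h2 : G' / ρ * ρ^2 = G' * ρ := by field_simp
    rw [h2]
    simp [Finset.card_univ, nsmul_eq_mul]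
  rw [hgoal, hnormgrad x, ← hρdef]
  -- final arithmetic
  have hfρ : f ρ = 2*k*α*ρ*exp (-(α*ρ^2)) := rfl
  have hm : 0 < f ρ := by rw [hfρ]; positivity
  have hAne : a (f ρ) ≠ 0 := by
    intro h
    have h1 := (hcond (f ρ) hm).1
    rw [h, div_zero] at h1
    linarith
  have hApos : 0 < a (f ρ) := lt_of_le_of_ne (ha_nonneg _ hm.le) (Ne.symm hAne)
  have haA : a₀ * a (f ρ) ≤ f ρ * A' := by
    have h1 := (hcond (f ρ) hm).1
    rw [le_div_iff₀ hApos] at h1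
    linarith [h1]
  have hxρ : r/2 < ρ := hx.1
  have hρ2 : r^2/4 ≤ ρ^2 := by nlinarith [hxρ, hr]
  have hκα : κ = α * r^2 := by rw [hα]; field_simp
  have h2α : 1 + (n:ℝ)/a₀ ≤ 2*α*ρ^2 := by
    have h6 : κ/2 ≤ 2*α*ρ^2 := by
      nlinarith [mul_nonneg hα0.le (by linarith : (0:ℝ) ≤ ρ^2 - r^2/4)]
    rw [hκ] at h6; linarith
  have key : (n:ℝ) * a (f ρ) + A' * (f ρ) * (1 - 2*α*ρ^2) ≤ 0 := by
    have h3 : (n:ℝ)/a₀ ≤ 2*α*ρ^2 - 1 := by linarith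
    have h4 := mul_le_mul haA h3 (by positivity) (le_trans (by positivity) haA)
    have h5 : a₀ * a (f ρ) * ((n:ℝ)/a₀) = n * a (f ρ) := by field_simp
    nlinarith [h4, h5]
  have hGρ : G ρ = a (f ρ) / ρ := rfl
  have hexpand : -((n:ℝ) * G ρ + G' * ρ)
      = ((-(n:ℝ)) * a (f ρ) - A' * (f ρ) * (1 - 2*α*ρ^2) + a (f ρ)) / ρ := by
    rw [hGρ, hG'def, hfρ]
    field_simp
    ring
  rw [hexpand, div_le_div_iff_of_pos_right hρ]
  linarith [key]
end

section
/- Let ϑ : [0,D] → ℝ be C¹ with ϑ' > 0 nonincreasing, satisfying d/dt[a(ϑ'(t))] + ((n−1)/R₀) a(ϑ'(t)) + h̄ = 0. Let x₁ ∈ ℝⁿ and define v(x) = ϑ(|x−x₁| − R₀) on the region {x : R₀ < |x−x₁| < R₀ + D}. Then the A-Laplacian of v satisfies Δ_A v(x) = a'(ϑ'(d(x))) ϑ''(d(x)) + ((n−1)/|x−x₁|) a(ϑ'(d(x))), where d(x) = |x−x₁| − R₀, and consequently Δ_A v(x) + h̄ ≤ 0 whenever |x−x₁| > R₀. -/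
open Real Set Finset

theorem my_hasFDerivAt_norm {F : Type*} [NormedAddCommGroup F] [InnerProductSpace ℝ F]
    {x : F} (hx : x ≠ 0) :
    HasFDerivAt (fun y : F => ‖y‖) (‖x‖⁻¹ • innerSL ℝ x) x := by
  have hpos : (0:ℝ) < ‖x‖ := norm_pos_iff.2 hx
  have h1 : HasFDerivAt (fun y : F => ‖y‖^2) (2 • innerSL ℝ x) x :=
    (hasStrictFDerivAt_norm_sq x).hasFDerivAt
  have h2 : HasDerivAt Real.sqrt (1 / (2 * Real.sqrt (‖x‖^2))) (‖x‖^2) :=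
    Real.hasDerivAt_sqrt (by positivity)
  have h3 := h2.comp_hasFDerivAt x h1
  have heq : (Real.sqrt ∘ fun y : F => ‖y‖^2) = fun y : F => ‖y‖ :=
    funext fun y => by simp [Function.comp, Real.sqrt_sq (norm_nonneg y)]
  rw [heq] at h3
  refine h3.congr_fderiv ?_
  ext w
  simp only [ContinuousLinearMap.smul_apply, innerSL_apply_apply, smul_eq_mul,
    Real.sqrt_sq hpos.le]
  field_simp
  ring

set_option maxHeartbeats 1000000 in
/-- For the radial function `v(x) = ϑ(|x-x₁| - R₀)` built from a solution `ϑ`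
of the barrier ODE, the A-Laplacian satisfies
`Δ_A v = a'(ϑ'(d)) ϑ''(d) + ((n-1)/|x-x₁|) a(ϑ'(d))` and `Δ_A v + h̄ ≤ 0`
on the region `R₀ < |x-x₁| < R₀ + D`. -/
theorem radial_supersolution
    (n : ℕ) (hn : 2 ≤ n)
    (a : ℝ → ℝ) (haC1 : ContDiff ℝ 1 a) (ha_mono : StrictMonoOn a (Ici 0))
    (ha0 : a 0 = 0)
    (D R₀ h' : ℝ) (hD : 0 < D) (hR₀ : 0 < R₀) (hh : 0 < h')
    (ϑ : ℝ → ℝ)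
    (hϑC1 : ContDiffOn ℝ 1 ϑ (Icc 0 D))
    (hϑC2 : ContDiffOn ℝ 2 ϑ (Ioo 0 D))
    (hϑ'pos : ∀ t ∈ Icc (0:ℝ) D, 0 < deriv ϑ t)
    (hϑ'anti : AntitoneOn (deriv ϑ) (Icc 0 D))
    (hϑ''nonpos : ∀ t ∈ Ioo (0:ℝ) D, deriv (deriv ϑ) t ≤ 0)
    (hode : ∀ t ∈ Ioo (0:ℝ) D,
      deriv (fun s => a (deriv ϑ s)) t + (((n : ℝ) - 1) / R₀) * a (deriv ϑ t) + h' = 0)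
    (x₁ : EuclideanSpace ℝ (Fin n)) :
    let v : EuclideanSpace ℝ (Fin n) → ℝ := fun y => ϑ (‖y - x₁‖ - R₀)
    let E : Fin n → EuclideanSpace ℝ (Fin n) := fun i => EuclideanSpace.single i 1
    let ΔA : EuclideanSpace ℝ (Fin n) → ℝ := fun x =>
      ∑ i : Fin n, fderiv ℝ
        (fun y => (a ‖gradient v y‖ / ‖gradient v y‖) * fderiv ℝ v y (E i)) x (E i)
    ∀ x : EuclideanSpace ℝ (Fin n), R₀ < ‖x - x₁‖ → ‖x - x₁‖ < R₀ + D →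
      ΔA x = deriv a (deriv ϑ (‖x - x₁‖ - R₀)) * deriv (deriv ϑ) (‖x - x₁‖ - R₀) +
          (((n : ℝ) - 1) / ‖x - x₁‖) * a (deriv ϑ (‖x - x₁‖ - R₀)) ∧
      ΔA x + h' ≤ 0 := by
  intro v Eb ΔA x hx1 hx2
  -- basic positivity facts
  have hr0 : (0:ℝ) < ‖x - x₁‖ := lt_trans hR₀ hx1
  have hxne : x - x₁ ≠ 0 := fun h => by simp [h] at hr0
  set r : ℝ := ‖x - x₁‖ with hrdef
  have hd : r - R₀ ∈ Ioo (0:ℝ) D := ⟨by simp only [hrdef]; linarith, by simp only [hrdef]; linarith⟩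
  -- the open region
  set U : Set (EuclideanSpace ℝ (Fin n)) :=
    (fun y : EuclideanSpace ℝ (Fin n) => ‖y - x₁‖) ⁻¹' (Ioo R₀ (R₀ + D)) with hUdef
  have hUopen : IsOpen U :=
    isOpen_Ioo.preimage ((continuous_id.sub continuous_const).norm)
  have hxU : x ∈ U := ⟨hx1, hx2⟩
  -- derivative of the distance function
  have hnormD : ∀ y : EuclideanSpace ℝ (Fin n), y - x₁ ≠ 0 →
      HasFDerivAt (fun z : EuclideanSpace ℝ (Fin n) => ‖z - x₁‖)
        (‖y - x₁‖⁻¹ • innerSL ℝ (y - x₁)) y := by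
    intro y hy
    have h := (my_hasFDerivAt_norm hy).comp y ((hasFDerivAt_id y).sub_const x₁)
    simpa [Function.comp_def] using h
  -- differentiability of ϑ and deriv ϑ inside
  have hϑ'C : ContDiffOn ℝ 1 (deriv ϑ) (Ioo 0 D) :=
    hϑC2.deriv_of_isOpen isOpen_Ioo (by norm_num)
  have hϑdiff : ∀ t ∈ Ioo (0:ℝ) D, HasDerivAt ϑ (deriv ϑ t) t := fun t ht =>
    ((hϑC2.contDiffAt (isOpen_Ioo.mem_nhds ht)).differentiableAt (by norm_num)).hasDerivAt
  have hϑ'diff : ∀ t ∈ Ioo (0:ℝ) D, HasDerivAt (deriv ϑ) (deriv (deriv ϑ) t) t := fun t ht =>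
    ((hϑ'C.contDiffAt (isOpen_Ioo.mem_nhds ht)).differentiableAt one_ne_zero).hasDerivAt
  -- derivative of v on U
  have hvD : ∀ y ∈ U, HasFDerivAt v
      (deriv ϑ (‖y - x₁‖ - R₀) • (‖y - x₁‖⁻¹ • innerSL ℝ (y - x₁))) y := by
    intro y hy
    have hy1 : R₀ < ‖y - x₁‖ := hy.1
    have hy2 : ‖y - x₁‖ < R₀ + D := hy.2
    have hyne : y - x₁ ≠ 0 := by
      intro h; rw [h, norm_zero] at hy1; linarith
    have hdy : ‖y - x₁‖ - R₀ ∈ Ioo (0:ℝ) D := ⟨by linarith, by linarith⟩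
    have := (hϑdiff _ hdy).comp_hasFDerivAt y ((hnormD y hyne).sub_const R₀)
    simpa [v, Function.comp_def] using this
  -- the gradient of v on U
  have hθpos : ∀ y ∈ U, 0 < deriv ϑ (‖y - x₁‖ - R₀) := by
    intro y hy
    exact hϑ'pos _ ⟨by have := hy.1; linarith, by have := hy.2; linarith⟩
  have hgrad : ∀ y ∈ U, gradient v y
      = (deriv ϑ (‖y - x₁‖ - R₀) * ‖y - x₁‖⁻¹) • (y - x₁) := by
    intro y hy
    apply HasGradientAt.gradient
    rw [hasGradientAt_iff_hasFDerivAt]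
    refine (hvD y hy).congr_fderiv ?_
    ext w
    simp only [InnerProductSpace.toDual_apply_apply, ContinuousLinearMap.smul_apply,
      innerSL_apply_apply, smul_eq_mul, real_inner_smul_left]
    ring
  have hgradnorm : ∀ y ∈ U, ‖gradient v y‖ = deriv ϑ (‖y - x₁‖ - R₀) := by
    intro y hy
    have hy1 : R₀ < ‖y - x₁‖ := hy.1
    have hny : (0:ℝ) < ‖y - x₁‖ := lt_trans hR₀ hy1
    rw [hgrad y hy, norm_smul, Real.norm_eq_abs,
      abs_of_pos (mul_pos (hθpos y hy) (inv_pos.2 hny))]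
    field_simp
  -- value of fderiv v
  have hfd : ∀ y ∈ U, ∀ i : Fin n, fderiv ℝ v y (Eb i)
      = deriv ϑ (‖y - x₁‖ - R₀) * (‖y - x₁‖⁻¹ * (y i - x₁ i)) := by
    intro y hy i
    rw [(hvD y hy).fderiv]
    simp [Eb, EuclideanSpace.inner_single_right]
  -- eventual equality of the integrand
  have heqv : ∀ i : Fin n,
      (fun y => (a ‖gradient v y‖ / ‖gradient v y‖) * fderiv ℝ v y (Eb i)) =ᶠ[nhds x]
      (fun y => a (deriv ϑ (‖y - x₁‖ - R₀)) * (‖y - x₁‖⁻¹ * (y i - x₁ i))) := by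
    intro i
    filter_upwards [hUopen.mem_nhds hxU] with y hy
    rw [hgradnorm y hy, hfd y hy i]
    have hθne : deriv ϑ (‖y - x₁‖ - R₀) ≠ 0 := ne_of_gt (hθpos y hy)
    field_simp
  -- derivative of a ∘ deriv ϑ at r - R₀
  have hA' : HasDerivAt (fun s => a (deriv ϑ s))
      (deriv a (deriv ϑ (r - R₀)) * deriv (deriv ϑ) (r - R₀)) (r - R₀) := by
    have h1 : HasDerivAt a (deriv a (deriv ϑ (r - R₀))) (deriv ϑ (r - R₀)) :=
      ((haC1.differentiable one_ne_zero) _).hasDerivAt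
    exact h1.comp _ (hϑ'diff _ hd)
  set A' : ℝ := deriv a (deriv ϑ (r - R₀)) * deriv (deriv ϑ) (r - R₀) with hA'def
  set Ca : ℝ := a (deriv ϑ (r - R₀)) with hCadef
  set Lx : EuclideanSpace ℝ (Fin n) →L[ℝ] ℝ := r⁻¹ • innerSL ℝ (x - x₁) with hLxdef
  have hrx : HasFDerivAt (fun z : EuclideanSpace ℝ (Fin n) => ‖z - x₁‖) Lx x := hnormD x hxne
  have hAx : HasFDerivAt (fun y : EuclideanSpace ℝ (Fin n) => a (deriv ϑ (‖y - x₁‖ - R₀)))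
      (A' • Lx) x := by
    have := hA'.comp_hasFDerivAt x (hrx.sub_const R₀)
    simpa [Function.comp_def] using this
  have hinvx : HasFDerivAt (fun y : EuclideanSpace ℝ (Fin n) => ‖y - x₁‖⁻¹)
      ((-(r ^ 2)⁻¹) • Lx) x := by
    have := (hasDerivAt_inv (ne_of_gt hr0)).comp_hasFDerivAt x hrx
    exact this
  have hcoord : ∀ i : Fin n, HasFDerivAt (fun y : EuclideanSpace ℝ (Fin n) => y i - x₁ i)
      (EuclideanSpace.proj i : EuclideanSpace ℝ (Fin n) →L[ℝ] ℝ) x := by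
    intro i
    exact ((EuclideanSpace.proj i :
      EuclideanSpace ℝ (Fin n) →L[ℝ] ℝ).hasFDerivAt).sub_const (x₁ i)
  have hFi : ∀ i : Fin n, HasFDerivAt
      (fun y => a (deriv ϑ (‖y - x₁‖ - R₀)) * (‖y - x₁‖⁻¹ * (y i - x₁ i)))
      (Ca • (‖x - x₁‖⁻¹ • (EuclideanSpace.proj i :
          EuclideanSpace ℝ (Fin n) →L[ℝ] ℝ) + (x i - x₁ i) • ((-(r ^ 2)⁻¹) • Lx))
        + (‖x - x₁‖⁻¹ * (x i - x₁ i)) • (A' • Lx)) x := by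
    intro i
    exact hAx.mul ((hinvx).mul (hcoord i))
  -- compute each summand
  have hLxi : ∀ i : Fin n, Lx (Eb i) = r⁻¹ * (x i - x₁ i) := by
    intro i
    simp [hLxdef, Eb, EuclideanSpace.inner_single_right]
  have hval : ∀ i : Fin n,
      fderiv ℝ (fun y => (a ‖gradient v y‖ / ‖gradient v y‖) * fderiv ℝ v y (Eb i)) x (Eb i)
      = Ca * (r⁻¹ + (x i - x₁ i) * (-(r ^ 2)⁻¹ * (r⁻¹ * (x i - x₁ i))))
        + (r⁻¹ * (x i - x₁ i)) * (A' * (r⁻¹ * (x i - x₁ i))) := by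
    intro i
    rw [(heqv i).fderiv_eq, (hFi i).fderiv]
    simp only [ContinuousLinearMap.add_apply, ContinuousLinearMap.smul_apply,
      smul_eq_mul, hLxi i, ← hrdef]
    have hproj : (EuclideanSpace.proj i : EuclideanSpace ℝ (Fin n) →L[ℝ] ℝ) (Eb i) = 1 := by
      simp [Eb]
    rw [hproj]
    ring
  -- the sum of squares of coordinates
  have hsumsq : ∑ i : Fin n, (x i - x₁ i) * (x i - x₁ i) = r ^ 2 := by
    have h1 : (inner ℝ (x - x₁) (x - x₁) : ℝ) = ‖x - x₁‖ ^ 2 := real_inner_self_eq_norm_sq _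
    rw [← hrdef] at h1
    rw [← h1]
    simp only [PiLp.inner_apply, PiLp.sub_apply, RCLike.inner_apply, conj_trivial]
  -- main computation
  have hmain : ΔA x = A' + (((n : ℝ) - 1) / r) * Ca := by
    have h1 : ΔA x = ∑ i : Fin n,
        (Ca * (r⁻¹ + (x i - x₁ i) * (-(r ^ 2)⁻¹ * (r⁻¹ * (x i - x₁ i))))
          + (r⁻¹ * (x i - x₁ i)) * (A' * (r⁻¹ * (x i - x₁ i)))) := by
      simp only [ΔA]
      exact Finset.sum_congr rfl fun i _ => hval i
    rw [h1]
    have h2 : ∀ i : Fin n,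
        Ca * (r⁻¹ + (x i - x₁ i) * (-(r ^ 2)⁻¹ * (r⁻¹ * (x i - x₁ i))))
          + (r⁻¹ * (x i - x₁ i)) * (A' * (r⁻¹ * (x i - x₁ i)))
        = Ca * r⁻¹ + (A' * r⁻¹ * r⁻¹ - Ca * (r ^ 2)⁻¹ * r⁻¹) * ((x i - x₁ i) * (x i - x₁ i)) := by
      intro i; ring
    rw [Finset.sum_congr rfl fun i _ => h2 i, Finset.sum_add_distrib, Finset.sum_const,
      ← Finset.mul_sum, hsumsq]
    simp only [card_univ, Fintype.card_fin, nsmul_eq_mul]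
    have hrne : r ≠ 0 := ne_of_gt hr0
    have hr1 : r⁻¹ * r = 1 := inv_mul_cancel₀ hrne
    have hr2 : (r ^ 2)⁻¹ * r ^ 2 = 1 := inv_mul_cancel₀ (pow_ne_zero 2 hrne)
    have hexp : (A' * r⁻¹ * r⁻¹ - Ca * (r ^ 2)⁻¹ * r⁻¹) * r ^ 2
        = A' - Ca * r⁻¹ := by
      have : r⁻¹ * r⁻¹ * r ^ 2 = 1 := by rw [sq]; calc r⁻¹ * r⁻¹ * (r * r) = (r⁻¹ * r) * (r⁻¹ * r) := by ring
                                            _ = 1 := by rw [hr1]; ring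
      calc (A' * r⁻¹ * r⁻¹ - Ca * (r ^ 2)⁻¹ * r⁻¹) * r ^ 2
          = A' * (r⁻¹ * r⁻¹ * r ^ 2) - Ca * r⁻¹ * ((r ^ 2)⁻¹ * r ^ 2) := by ring
        _ = A' - Ca * r⁻¹ := by rw [this, hr2]; ring
    rw [hexp]
    have : ((n : ℝ) - 1) / r * Ca = (n : ℝ) * (Ca * r⁻¹) - Ca * r⁻¹ := by
      rw [div_eq_mul_inv]; ring
    rw [this]
    ring
  have hode' := hode (r - R₀) hd
  have hderiv_eq : deriv (fun s => a (deriv ϑ s)) (r - R₀) = A' := hA'.deriv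
  rw [hderiv_eq] at hode'
  have hCapos : 0 < Ca := by
    rw [hCadef, ← ha0]
    exact ha_mono (Set.mem_Ici.2 (le_refl 0)) (Set.mem_Ici.2 (le_of_lt (hϑ'pos _ ⟨le_of_lt hd.1, le_of_lt hd.2⟩))) 
      (hϑ'pos _ ⟨le_of_lt hd.1, le_of_lt hd.2⟩)
  constructor
  · rw [hmain]
  · rw [hmain]
    have hfrac : (((n : ℝ) - 1) / r) * Ca ≤ (((n : ℝ) - 1) / R₀) * Ca := by
      apply mul_le_mul_of_nonneg_right _ (le_of_lt hCapos)
      apply div_le_div_of_nonneg_left _ hR₀ (le_of_lt hx1)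
      have : (2:ℝ) ≤ (n:ℝ) := by exact_mod_cast hn
      linarith
    linarith
end
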